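/- Let F : \mathbb{R} \to \mathbb{R} be the analytic odd extension of r \mapsto \sqrt{r \tanh r}. Then F' does not vanish on \mathbb{R}, and F'' vanishes only at the origin, where it has a simple zero (i.e. F''(0) = 0 and F'''(0) \neq 0). -/

import Mathlib

open scoped ContDiff

noncomputable def gg (r : ℝ) : ℝ := r * Real.sinh r / Real.cosh r

noncomputable def gg1 (r : ℝ) : ℝ := (Real.sinh r * Real.cosh r + r) / Real.cosh r ^ 2

noncomputable def gg2 (r : ℝ) : ℝ :=
  2 - 2 * Real.sinh r * (Real.sinh r * Real.cosh r + r) / Real.cosh r ^ 3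

noncomputable def gg3 (r : ℝ) : ℝ :=
  (6 * Real.sinh r ^ 2 * (Real.sinh r * Real.cosh r + r)
    - 2 * Real.cosh r ^ 2 * (Real.sinh r * Real.cosh r + r)
    - 4 * Real.sinh r * Real.cosh r ^ 3) / Real.cosh r ^ 4

lemma hder_gg (r : ℝ) : HasDerivAt gg (gg1 r) r := by
  have hc := (Real.cosh_pos (x := r)).ne'
  have h : HasDerivAt (fun x : ℝ => x * Real.sinh x / Real.cosh x)
      (((1 * Real.sinh r + r * Real.cosh r) * Real.cosh r - r * Real.sinh r * Real.sinh r) /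
        Real.cosh r ^ 2) r :=
    ((hasDerivAt_id r).mul (Real.hasDerivAt_sinh r)).div (Real.hasDerivAt_cosh r) hc
  convert h using 1
  · rfl
  unfold gg1
  field_simp
  linear_combination (-r) * Real.cosh_sq_sub_sinh_sq r

lemma hder_gg1 (r : ℝ) : HasDerivAt gg1 (gg2 r) r := by
  have hc := (Real.cosh_pos (x := r)).ne'
  have hc2 : Real.cosh r ^ 2 ≠ 0 := pow_ne_zero _ hc
  have h : HasDerivAt (fun x : ℝ => (Real.sinh x * Real.cosh x + x) / Real.cosh x ^ 2)
      ((((Real.cosh r * Real.cosh r + Real.sinh r * Real.sinh r) + 1) * Real.cosh r ^ 2 -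
        (Real.sinh r * Real.cosh r + r) * (2 * Real.cosh r ^ 1 * Real.sinh r)) /
        (Real.cosh r ^ 2) ^ 2) r := by
    exact (((Real.hasDerivAt_sinh r).mul (Real.hasDerivAt_cosh r)).add (hasDerivAt_id r)).div
      ((Real.hasDerivAt_cosh r).pow 2) hc2
  convert h using 1
  · rfl
  unfold gg2
  field_simp
  linear_combination (Real.cosh r) * Real.cosh_sq_sub_sinh_sq r

lemma hder_gg2 (r : ℝ) : HasDerivAt gg2 (gg3 r) r := by
  have hc := (Real.cosh_pos (x := r)).ne'
  have hc3 : Real.cosh r ^ 3 ≠ 0 := pow_ne_zero _ hc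
  have h : HasDerivAt (fun x : ℝ =>
      2 - 2 * Real.sinh x * (Real.sinh x * Real.cosh x + x) / Real.cosh x ^ 3)
      (0 - ((2 * Real.cosh r * (Real.sinh r * Real.cosh r + r) +
          2 * Real.sinh r * ((Real.cosh r * Real.cosh r + Real.sinh r * Real.sinh r) + 1)) *
          Real.cosh r ^ 3 -
        2 * Real.sinh r * (Real.sinh r * Real.cosh r + r) * (3 * Real.cosh r ^ 2 * Real.sinh r)) /
        (Real.cosh r ^ 3) ^ 2) r := by
    have h1 : HasDerivAt (fun x : ℝ => 2 * Real.sinh x * (Real.sinh x * Real.cosh x + x))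
        (2 * Real.cosh r * (Real.sinh r * Real.cosh r + r) +
          2 * Real.sinh r * ((Real.cosh r * Real.cosh r + Real.sinh r * Real.sinh r) + 1)) r :=
      ((Real.hasDerivAt_sinh r).const_mul 2).mul
        (((Real.hasDerivAt_sinh r).mul (Real.hasDerivAt_cosh r)).add (hasDerivAt_id r))
    have h2 : HasDerivAt (fun x : ℝ => Real.cosh x ^ 3) (3 * Real.cosh r ^ 2 * Real.sinh r) r := by
      exact ((Real.hasDerivAt_cosh r).pow 3).congr_deriv (by norm_num)
    exact (hasDerivAt_const r 2).sub (h1.div h2 hc3)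
  convert h using 1
  · rfl
  unfold gg3
  field_simp
  linear_combination (-2 * Real.sinh r * Real.cosh r) * Real.cosh_sq_sub_sinh_sq r

lemma hder_gg3_zero : HasDerivAt gg3 (-8) 0 := by
  have hc := (Real.cosh_pos (x := 0)).ne'
  have hc4 : Real.cosh (0:ℝ) ^ 4 ≠ 0 := pow_ne_zero _ hc
  have hnum : HasDerivAt (fun x : ℝ =>
      6 * Real.sinh x ^ 2 * (Real.sinh x * Real.cosh x + x)
        - 2 * Real.cosh x ^ 2 * (Real.sinh x * Real.cosh x + x)
        - 4 * Real.sinh x * Real.cosh x ^ 3)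
      ((6 * (2 * Real.sinh 0 ^ 1 * Real.cosh 0)) * (Real.sinh 0 * Real.cosh 0 + 0) +
          6 * Real.sinh 0 ^ 2 * ((Real.cosh 0 * Real.cosh 0 + Real.sinh 0 * Real.sinh 0) + 1)
        - ((2 * (2 * Real.cosh 0 ^ 1 * Real.sinh 0)) * (Real.sinh 0 * Real.cosh 0 + 0) +
          2 * Real.cosh 0 ^ 2 * ((Real.cosh 0 * Real.cosh 0 + Real.sinh 0 * Real.sinh 0) + 1))
        - (4 * Real.cosh 0 * Real.cosh 0 ^ 3 +
          4 * Real.sinh 0 * (3 * Real.cosh 0 ^ 2 * Real.sinh 0))) 0 := by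
    have hs2 : HasDerivAt (fun x : ℝ => 6 * Real.sinh x ^ 2)
        (6 * (2 * Real.sinh 0 ^ 1 * Real.cosh 0)) 0 := ((Real.hasDerivAt_sinh 0).pow 2).const_mul 6
    have hsc : HasDerivAt (fun x : ℝ => Real.sinh x * Real.cosh x + x)
        ((Real.cosh 0 * Real.cosh 0 + Real.sinh 0 * Real.sinh 0) + 1) 0 :=
      ((Real.hasDerivAt_sinh 0).mul (Real.hasDerivAt_cosh 0)).add (hasDerivAt_id 0)
    have hc2 : HasDerivAt (fun x : ℝ => 2 * Real.cosh x ^ 2)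
        (2 * (2 * Real.cosh 0 ^ 1 * Real.sinh 0)) 0 := ((Real.hasDerivAt_cosh 0).pow 2).const_mul 2
    have hsc3 : HasDerivAt (fun x : ℝ => 4 * Real.sinh x * Real.cosh x ^ 3)
        (4 * Real.cosh 0 * Real.cosh 0 ^ 3 +
          4 * Real.sinh 0 * (3 * Real.cosh 0 ^ 2 * Real.sinh 0)) 0 := by
      have := (((Real.hasDerivAt_sinh 0).const_mul 4).mul ((Real.hasDerivAt_cosh 0).pow 3))
      exact this.congr_deriv (by norm_num)
    exact ((hs2.mul hsc).sub (hc2.mul hsc)).sub hsc3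
  have hden : HasDerivAt (fun x : ℝ => Real.cosh x ^ 4)
      (4 * Real.cosh 0 ^ 3 * Real.sinh 0) 0 := by
    exact ((Real.hasDerivAt_cosh 0).pow 4).congr_deriv (by norm_num)
  have h := hnum.div hden hc4
  convert h using 1
  · rfl
  · rfl
  · rfl
  simp [Real.sinh_zero, Real.cosh_zero]
  norm_num

theorem deriv_properties_of_extension (F : ℝ → ℝ)
    (hval : ∀ r : ℝ, 0 ≤ r → F r = Real.sqrt (r * Real.tanh r))
    (hanal : AnalyticOn ℝ F Set.univ)
    (hodd : ∀ r : ℝ, F (-r) = -F r) :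
    (∀ r : ℝ, deriv F r ≠ 0) ∧
    (∀ r : ℝ, iteratedDeriv 2 F r = 0 ↔ r = 0) ∧
    iteratedDeriv 3 F 0 ≠ 0 := by
  have hsm : ContDiff ℝ ∞ F := hanal.contDiff
  have hsm1 : ContDiff ℝ ∞ (deriv F) := (contDiff_infty_iff_deriv.mp hsm).2
  have hsm2 : ContDiff ℝ ∞ (deriv (deriv F)) := (contDiff_infty_iff_deriv.mp hsm1).2
  have hd0 : ∀ r : ℝ, HasDerivAt F (deriv F r) r := fun r =>
    ((hsm.differentiable (by simp)) r).hasDerivAt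
  have hd1 : ∀ r : ℝ, HasDerivAt (deriv F) (deriv (deriv F) r) r := fun r =>
    ((hsm1.differentiable (by simp)) r).hasDerivAt
  have hd2 : ∀ r : ℝ, HasDerivAt (deriv (deriv F)) (deriv (deriv (deriv F)) r) r := fun r =>
    ((hsm2.differentiable (by simp)) r).hasDerivAt
  have hd3 : ∀ r : ℝ, HasDerivAt (deriv (deriv (deriv F)))
      (deriv (deriv (deriv (deriv F))) r) r := fun r =>
    (((contDiff_infty_iff_deriv.mp hsm2).2.differentiable (by simp)) r).hasDerivAt
  have hF0 : F 0 = 0 := by simpa using hval 0 le_rfl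
  -- F r ^ 2 = gg r everywhere
  have hF2 : ∀ r : ℝ, F r ^ 2 = gg r := by
    intro r
    rcases le_or_gt 0 r with h | h
    · rw [hval r h, Real.sq_sqrt (mul_nonneg h (by
        rw [Real.tanh_eq_sinh_div_cosh]
        exact div_nonneg (Real.sinh_nonneg_iff.mpr h) (Real.cosh_pos r).le)),
        Real.tanh_eq_sinh_div_cosh, gg]
      ring
    · have h2 : (0:ℝ) ≤ -r := by linarith
      have hv := hval (-r) h2
      rw [hodd r] at hv
      have hFr : F r = -Real.sqrt (-r * Real.tanh (-r)) := by linarith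
      have hnn : (0:ℝ) ≤ -r * Real.tanh (-r) :=
        mul_nonneg h2 (by
          rw [Real.tanh_eq_sinh_div_cosh]
          exact div_nonneg (Real.sinh_nonneg_iff.mpr h2) (Real.cosh_pos _).le)
      rw [hFr, neg_sq, Real.sq_sqrt hnn, Real.tanh_neg, Real.tanh_eq_sinh_div_cosh, gg]
      ring
  -- relation A
  have hA : ∀ r : ℝ, 2 * F r * deriv F r = gg1 r := by
    intro r
    have h1 : HasDerivAt (fun x => F x ^ 2) (2 * F r ^ 1 * deriv F r) r := (hd0 r).pow 2
    have h2 : HasDerivAt (fun x => F x ^ 2) (gg1 r) r := by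
      rw [funext hF2]; exact hder_gg r
    simpa using h1.unique h2
  -- relation B
  have hB : ∀ r : ℝ, 2 * deriv F r * deriv F r + 2 * F r * deriv (deriv F) r = gg2 r := by
    intro r
    have h1 : HasDerivAt (fun x => 2 * F x * deriv F x)
        (2 * deriv F r * deriv F r + 2 * F r * deriv (deriv F) r) r :=
      ((hd0 r).const_mul 2).mul (hd1 r)
    have h2 : HasDerivAt (fun x => 2 * F x * deriv F x) (gg2 r) r := by
      rw [funext hA]; exact hder_gg1 r
    exact h1.unique h2
  -- relation C
  have hC : ∀ r : ℝ,
      (2 * deriv (deriv F) r * deriv F r + 2 * deriv F r * deriv (deriv F) r) +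
        (2 * deriv F r * deriv (deriv F) r + 2 * F r * deriv (deriv (deriv F)) r) = gg3 r := by
    intro r
    have h1 : HasDerivAt (fun x => 2 * deriv F x * deriv F x + 2 * F x * deriv (deriv F) x)
        ((2 * deriv (deriv F) r * deriv F r + 2 * deriv F r * deriv (deriv F) r) +
          (2 * deriv F r * deriv (deriv F) r + 2 * F r * deriv (deriv (deriv F)) r)) r :=
      (((hd1 r).const_mul 2).mul (hd1 r)).add (((hd0 r).const_mul 2).mul (hd2 r))
    have h2 : HasDerivAt (fun x => 2 * deriv F x * deriv F x + 2 * F x * deriv (deriv F) x)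
        (gg3 r) r := by
      rw [funext hB]; exact hder_gg2 r
    exact h1.unique h2
  -- even/odd of derivatives
  have hEvenf1 : ∀ r : ℝ, deriv F (-r) = deriv F r := by
    intro r
    have h1 : HasDerivAt (fun x : ℝ => F (-x)) (deriv F (-r) * (-1)) r :=
      (hd0 (-r)).comp r (hasDerivAt_neg r)
    have heq : (fun x : ℝ => F (-x)) = fun x => -F x := funext hodd
    rw [heq] at h1
    have h2 : HasDerivAt (fun x : ℝ => -F x) (-deriv F r) r := (hd0 r).neg
    have := h1.unique h2
    linarith
  have hOddf2 : ∀ r : ℝ, deriv (deriv F) (-r) = -deriv (deriv F) r := by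
    intro r
    have h1 : HasDerivAt (fun x : ℝ => deriv F (-x)) (deriv (deriv F) (-r) * (-1)) r :=
      (hd1 (-r)).comp r (hasDerivAt_neg r)
    have heq : (fun x : ℝ => deriv F (-x)) = deriv F := funext hEvenf1
    rw [heq] at h1
    have := h1.unique (hd1 r)
    linarith
  have hf20 : deriv (deriv F) 0 = 0 := by
    have := hOddf2 0
    simp at this
    linarith
  -- positivity of F on (0, ∞)
  have hFpos : ∀ r : ℝ, 0 < r → 0 < F r := by
    intro r hr
    rw [hval r hr.le]
    apply Real.sqrt_pos.mpr
    rw [Real.tanh_eq_sinh_div_cosh]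
    exact mul_pos hr (div_pos (Real.sinh_pos_iff.mpr hr) (Real.cosh_pos r))
  -- deriv F 0 squared = 1
  have hgg20 : gg2 0 = 2 := by simp [gg2]
  have hf1sq : deriv F 0 ^ 2 = 1 := by
    have h := hB 0
    rw [hF0, hgg20] at h
    linear_combination h / 2
  -- part 1
  have hpos1 : ∀ r : ℝ, 0 < r → deriv F r ≠ 0 := by
    intro r hr h0
    have hA' := hA r
    rw [h0, mul_zero] at hA'
    have hg : 0 < gg1 r := by
      unfold gg1
      exact div_pos
        (add_pos (mul_pos (Real.sinh_pos_iff.mpr hr) (Real.cosh_pos r)) hr)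
        (pow_pos (Real.cosh_pos r) 2)
    linarith [hA'.symm]
  have part1 : ∀ r : ℝ, deriv F r ≠ 0 := by
    intro r
    rcases lt_trichotomy r 0 with h | h | h
    · intro h0
      exact hpos1 (-r) (by linarith) (by rw [hEvenf1 r]; exact h0)
    · subst h
      intro h0
      rw [h0] at hf1sq
      norm_num at hf1sq
    · exact hpos1 r h
  -- part 2 : second derivative negative for r > 0
  have hpos2 : ∀ r : ℝ, 0 < r → deriv (deriv F) r ≠ 0 := by
    intro r hr h0
    have hk : 4 * F r ^ 3 * deriv (deriv F) r = 2 * F r ^ 2 * gg2 r - gg1 r ^ 2 := by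
      linear_combination (2 * F r ^ 2) * hB r - (gg1 r + 2 * F r * deriv F r) * hA r
    have hs := Real.sinh_pos_iff.mpr hr
    have hc := Real.cosh_pos (x := r)
    have hid : 2 * gg r * gg2 r - gg1 r ^ 2 =
        -(((Real.sinh r * Real.cosh r - r) ^ 2 + 4 * r ^ 2 * Real.sinh r ^ 2) /
          Real.cosh r ^ 4) := by
      unfold gg gg1 gg2
      field_simp
      linear_combination (4 * r * Real.sinh r * Real.cosh r) * Real.cosh_sq_sub_sinh_sq r
    have hneg : 2 * F r ^ 2 * gg2 r - gg1 r ^ 2 < 0 := by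
      rw [hF2 r, hid]
      have hq : 0 < ((Real.sinh r * Real.cosh r - r) ^ 2 + 4 * r ^ 2 * Real.sinh r ^ 2) /
          Real.cosh r ^ 4 :=
        div_pos (lt_of_lt_of_le
          (mul_pos (mul_pos (by norm_num : (0:ℝ) < 4) (pow_pos hr 2)) (pow_pos hs 2))
          (le_add_of_nonneg_left (sq_nonneg _))) (pow_pos hc 4)
      linarith
    rw [h0, mul_zero] at hk
    linarith
  have hit2 : iteratedDeriv 2 F = deriv (deriv F) := by
    rw [iteratedDeriv_succ, iteratedDeriv_one]
  have part2 : ∀ r : ℝ, iteratedDeriv 2 F r = 0 ↔ r = 0 := by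
    intro r
    rw [hit2]
    constructor
    · intro h0
      by_contra hne
      rcases lt_or_gt_of_ne hne with h | h
      · have := hpos2 (-r) (by linarith)
        rw [hOddf2 r, h0] at this
        simp at this
      · exact hpos2 r h h0
    · intro h; rw [h]; exact hf20
  -- part 3
  have hD : 8 * deriv F 0 * deriv (deriv (deriv F)) 0 = -8 := by
    have h1 : HasDerivAt (fun x =>
        (2 * deriv (deriv F) x * deriv F x + 2 * deriv F x * deriv (deriv F) x) +
          (2 * deriv F x * deriv (deriv F) x + 2 * F x * deriv (deriv (deriv F)) x))
        (((2 * deriv (deriv (deriv F)) 0 * deriv F 0 +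
            2 * deriv (deriv F) 0 * deriv (deriv F) 0) +
          (2 * deriv (deriv F) 0 * deriv (deriv F) 0 +
            2 * deriv F 0 * deriv (deriv (deriv F)) 0)) +
          ((2 * deriv (deriv F) 0 * deriv (deriv F) 0 +
            2 * deriv F 0 * deriv (deriv (deriv F)) 0) +
          (2 * deriv F 0 * deriv (deriv (deriv F)) 0 +
            2 * F 0 * deriv (deriv (deriv (deriv F))) 0))) 0 :=
      ((((hd2 0).const_mul 2).mul (hd1 0)).add (((hd1 0).const_mul 2).mul (hd2 0))).add
        ((((hd1 0).const_mul 2).mul (hd2 0)).add (((hd0 0).const_mul 2).mul (hd3 0)))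
    have h2 : HasDerivAt (fun x =>
        (2 * deriv (deriv F) x * deriv F x + 2 * deriv F x * deriv (deriv F) x) +
          (2 * deriv F x * deriv (deriv F) x + 2 * F x * deriv (deriv (deriv F)) x))
        (-8) 0 := by
      rw [funext hC]; exact hder_gg3_zero
    have h := h1.unique h2
    rw [hF0, hf20] at h
    linarith
  refine ⟨part1, part2, ?_⟩
  have hit3 : iteratedDeriv 3 F 0 = deriv (deriv (deriv F)) 0 := by
    rw [iteratedDeriv_succ, hit2]
  rw [hit3]
  intro h0
  rw [h0] at hD
  norm_num at hD
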